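/- Let A ∈ L_{1|2}(H) with ‖A‖_{1|2} := max(‖A‖₂, ‖A_even‖₁) < 1. Then the series 1 + Σ_{n≥1} Cₙ(A) converges absolutely, where Cₙ(A) := (1/n!) Σ_{ξ∈Sₙ} sign(ξ) Π_{η∈Cycle(ξ)} tr(A^{|η|}) with the convention tr(A) := Tr(A_even); moreover |Cₙ(A)| ≤ ‖A‖_{1|2}ⁿ. -/

import Mathlib

open scoped InnerProductSpace ComplexConjugate

noncomputable section

/-- The absolute value `|A| = √(A*A)` of a bounded operator on a complex Hilbert space. -/
noncomputable def absCLM {H : Type} [NormedAddCommGroup H] [InnerProductSpace ℂ H]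
    [CompleteSpace H] (A : H →L[ℂ] H) : H →L[ℂ] H :=
  CFC.sqrt (ContinuousLinearMap.adjoint A * A)

/-- The trace of an operator computed along a Hilbert basis. -/
noncomputable def traceAlong {H : Type} [NormedAddCommGroup H] [InnerProductSpace ℂ H]
    [CompleteSpace H] {ι : Type} (b : HilbertBasis ι ℂ H) (A : H →L[ℂ] H) : ℂ :=
  ∑' i, ⟪b i, A (b i)⟫_ℂ

/-- `A` is trace class: `Tr |A| < ∞` along the Hilbert basis `b`. -/
def IsTraceClassAlong {H : Type} [NormedAddCommGroup H] [InnerProductSpace ℂ H]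
    [CompleteSpace H] {ι : Type} (b : HilbertBasis ι ℂ H) (A : H →L[ℂ] H) : Prop :=
  Summable fun i => (⟪b i, absCLM A (b i)⟫_ℂ).re

/-- The trace norm `‖A‖₁ = Tr |A|` along the Hilbert basis `b`. -/
noncomputable def traceNormAlong {H : Type} [NormedAddCommGroup H] [InnerProductSpace ℂ H]
    [CompleteSpace H] {ι : Type} (b : HilbertBasis ι ℂ H) (A : H →L[ℂ] H) : ℝ :=
  ∑' i, (⟪b i, absCLM A (b i)⟫_ℂ).re

/-- `A` is a Hilbert–Schmidt operator (along the Hilbert basis `b`). -/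
def IsHSAlong {H : Type} [NormedAddCommGroup H] [InnerProductSpace ℂ H]
    [CompleteSpace H] {ι : Type} (b : HilbertBasis ι ℂ H) (A : H →L[ℂ] H) : Prop :=
  Summable fun i => ‖A (b i)‖ ^ 2

/-- The Hilbert–Schmidt norm `‖A‖₂` along the Hilbert basis `b`. -/
noncomputable def hsNormAlong {H : Type} [NormedAddCommGroup H] [InnerProductSpace ℂ H]
    [CompleteSpace H] {ι : Type} (b : HilbertBasis ι ℂ H) (A : H →L[ℂ] H) : ℝ :=
  Real.sqrt (∑' i, ‖A (b i)‖ ^ 2)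

/-- `Cₙ(A) = (1/n!) Σ_{ξ∈Sₙ} sign ξ · Π_{η ∈ Cycle(ξ)} tr(A^{|η|})`, where `trA` is used
for the trace of `A` itself (cycles of length one) and traces of higher powers are
computed along the Hilbert basis `b`. -/
noncomputable def cycleSum {H : Type} [NormedAddCommGroup H] [InnerProductSpace ℂ H]
    [CompleteSpace H] {ι : Type} (b : HilbertBasis ι ℂ H) (trA : ℂ) (A : H →L[ℂ] H)
    (n : ℕ) : ℂ :=
  ((Nat.factorial n : ℂ))⁻¹ * ∑ ξ : Equiv.Perm (Fin n),
    ((Equiv.Perm.sign ξ : ℤ) : ℂ) * trA ^ (n - ξ.support.card) *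
      ∏ η ∈ ξ.cycleFactorsFinset, traceAlong b (A ^ η.support.card)

/-- The extended Fredholm determinant `Det(1+A)` for `A ∈ L_{1|2}(H)`, with respect to the
splitting given by the projections `P₁, P₂`: `Det(1+A) = 1 + Σ_{n≥1} Cₙ(A)`, where in `Cₙ(A)`
the trace of `A` is taken to be `Tr(A_even)`. -/
noncomputable def fredholmDetExt {H : Type} [NormedAddCommGroup H] [InnerProductSpace ℂ H]
    [CompleteSpace H] {ι : Type} (b : HilbertBasis ι ℂ H) (P₁ P₂ : H →L[ℂ] H)
    (A : H →L[ℂ] H) : ℂ :=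
  1 + ∑' n : ℕ, cycleSum b (traceAlong b (P₁ * A * P₁ + P₂ * A * P₂)) A (n + 1)

/-- The classical Fredholm determinant `Det(1+A)` of a trace class operator `A`. -/
noncomputable def fredholmDetCl {H : Type} [NormedAddCommGroup H] [InnerProductSpace ℂ H]
    [CompleteSpace H] {ι : Type} (b : HilbertBasis ι ℂ H) (A : H →L[ℂ] H) : ℂ :=
  1 + ∑' n : ℕ, cycleSum b (traceAlong b A) A (n + 1)

end

set_option maxHeartbeats 2000000
set_option synthInstance.maxHeartbeats 400000
open scoped InnerProductSpace ComplexConjugate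
open ContinuousLinearMap

namespace Stmt11Aux
variable {H : Type} [NormedAddCommGroup H] [InnerProductSpace ℂ H] [CompleteSpace H]
variable (b : HilbertBasis ℕ ℂ H)

lemma sq_le_imp {a c : ℝ} (ha : 0 ≤ a) (hc : 0 ≤ c) (h : a^2 ≤ c^2) : a ≤ c := by
  nlinarith

/-- Parseval identity along a Hilbert basis. -/
lemma parseval (x : H) : HasSum (fun i => ‖⟪b i, x⟫_ℂ‖^2) (‖x‖^2) := by
  have h := (b.hasSum_inner_mul_inner x x).mapL Complex.reCLM
  have h2 : Complex.reCLM ⟪x, x⟫_ℂ = ‖x‖^2 := by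
    rw [Complex.reCLM_apply, @inner_self_eq_norm_sq_to_K ℂ]
    exact_mod_cast Complex.ofReal_re _
  rw [h2] at h
  refine h.congr_fun fun i => ?_
  have : ⟪x, b i⟫_ℂ = conj ⟪b i, x⟫_ℂ := (inner_conj_symm _ _).symm
  rw [Complex.reCLM_apply, this, mul_comm, Complex.mul_conj]
  norm_cast
  rw [Complex.normSq_eq_norm_sq]

/-- Cauchy–Schwarz for tsums of nonnegative reals. -/
lemma tsum_mul_le_sqrt {f g : ℕ → ℝ} (hf0 : ∀ i, 0 ≤ f i) (hg0 : ∀ i, 0 ≤ g i)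
    (hf : Summable (fun i => f i ^ 2)) (hg : Summable (fun i => g i ^ 2)) :
    Summable (fun i => f i * g i) ∧
      ∑' i, f i * g i ≤ Real.sqrt (∑' i, f i ^ 2) * Real.sqrt (∑' i, g i ^ 2) := by
  have hsum : Summable (fun i => f i * g i) := by
    refine Summable.of_nonneg_of_le (fun i => mul_nonneg (hf0 i) (hg0 i))
      (fun i => ?_) ((hf.add hg).div_const 2)
    nlinarith [sq_nonneg (f i - g i)]
  refine ⟨hsum, hsum.tsum_le_of_sum_le fun s => ?_⟩
  have h1 : (∑ i ∈ s, f i * g i)^2 ≤ (∑ i ∈ s, f i ^ 2) * ∑ i ∈ s, g i ^ 2 :=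
    Finset.sum_mul_sq_le_sq_mul_sq s f g
  have h2 : (∑ i ∈ s, f i ^ 2) ≤ ∑' i, f i ^ 2 := hf.sum_le_tsum s (fun i _ => sq_nonneg _)
  have h3 : (∑ i ∈ s, g i ^ 2) ≤ ∑' i, g i ^ 2 := hg.sum_le_tsum s (fun i _ => sq_nonneg _)
  refine sq_le_imp (Finset.sum_nonneg fun i _ => mul_nonneg (hf0 i) (hg0 i))
    (mul_nonneg (Real.sqrt_nonneg _) (Real.sqrt_nonneg _)) ?_
  rw [mul_pow, Real.sq_sqrt (le_trans (Finset.sum_nonneg fun i _ => sq_nonneg (f i)) h2),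
    Real.sq_sqrt (le_trans (Finset.sum_nonneg fun i _ => sq_nonneg (g i)) h3)]
  calc (∑ i ∈ s, f i * g i)^2 ≤ (∑ i ∈ s, f i ^ 2) * ∑ i ∈ s, g i ^ 2 := h1
    _ ≤ (∑' i, f i ^ 2) * ∑' i, g i ^ 2 := by
        apply mul_le_mul h2 h3 (Finset.sum_nonneg fun i _ => sq_nonneg _)
          (le_trans (Finset.sum_nonneg fun i _ => sq_nonneg (f i)) h2)

/-- Finite partial HS sums of the adjoint are controlled by HS sums. -/
lemma adjoint_hs_sum_le (X : H →L[ℂ] H) (hX : Summable fun j => ‖X (b j)‖^2) (s : Finset ℕ) :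
    ∑ i ∈ s, ‖adjoint X (b i)‖^2 ≤ ∑' j, ‖X (b j)‖^2 := by
  have h1 : ∀ i, ‖adjoint X (b i)‖^2 = ∑' j, ‖⟪X (b j), b i⟫_ℂ‖^2 := by
    intro i
    rw [← (parseval b (adjoint X (b i))).tsum_eq]
    exact tsum_congr fun j => by rw [adjoint_inner_right]
  calc ∑ i ∈ s, ‖adjoint X (b i)‖^2 = ∑ i ∈ s, ∑' j, ‖⟪X (b j), b i⟫_ℂ‖^2 := by
        exact Finset.sum_congr rfl fun i _ => h1 i
    _ = ∑' j, ∑ i ∈ s, ‖⟪X (b j), b i⟫_ℂ‖^2 := by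
        rw [Summable.tsum_finsetSum]
        intro i _
        have := parseval b (adjoint X (b i))
        refine (this.summable).congr fun j => ?_
        rw [adjoint_inner_right]
    _ ≤ ∑' j, ‖X (b j)‖^2 := by
        refine Summable.tsum_le_tsum (fun j => ?_) ?_ hX
        · have h := b.orthonormal.sum_inner_products_le (X (b j)) (s := s)
          refine le_trans (le_of_eq ?_) h
          exact Finset.sum_congr rfl fun i _ => by rw [← norm_inner_symm]
        · refine Summable.of_nonneg_of_le (fun j => Finset.sum_nonneg fun i _ => sq_nonneg _)
            (fun j => ?_) hX
          have h := b.orthonormal.sum_inner_products_le (X (b j)) (s := s)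
          refine le_trans (le_of_eq ?_) h
          exact Finset.sum_congr rfl fun i _ => by rw [← norm_inner_symm]

lemma adjoint_hs (X : H →L[ℂ] H) (hX : Summable fun j => ‖X (b j)‖^2) :
    Summable (fun i => ‖adjoint X (b i)‖^2) ∧
      ∑' i, ‖adjoint X (b i)‖^2 ≤ ∑' j, ‖X (b j)‖^2 := by
  have key := adjoint_hs_sum_le b X hX
  exact ⟨summable_of_sum_le (fun i => sq_nonneg _) key,
    (summable_of_sum_le (fun i => sq_nonneg _) key).tsum_le_of_sum_le key⟩

lemma apply_le_of_hs (A : H →L[ℂ] H) (hhs : Summable fun i => ‖A (b i)‖^2) (x : H) :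
    ‖A x‖ ≤ Real.sqrt (∑' i, ‖A (b i)‖^2) * ‖x‖ := by
  have hs1 : HasSum (fun i => (⟪b i, x⟫_ℂ) • A (b i)) (A x) := by
    have := (b.hasSum_repr x).mapL A
    refine this.congr_fun fun i => ?_
    rw [ContinuousLinearMap.map_smul, b.repr_apply_apply]
  have hpar := parseval b x
  have hCS := tsum_mul_le_sqrt (f := fun i => ‖⟪b i, x⟫_ℂ‖) (g := fun i => ‖A (b i)‖)
    (fun i => norm_nonneg _) (fun i => norm_nonneg _) hpar.summable hhs
  have hnorms : Summable (fun i => ‖(⟪b i, x⟫_ℂ) • A (b i)‖) := by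
    refine hCS.1.congr fun i => ?_
    rw [norm_smul]
  calc ‖A x‖ = ‖∑' i, (⟪b i, x⟫_ℂ) • A (b i)‖ := by rw [hs1.tsum_eq]
    _ ≤ ∑' i, ‖(⟪b i, x⟫_ℂ) • A (b i)‖ := norm_tsum_le_tsum_norm hnorms
    _ = ∑' i, ‖⟪b i, x⟫_ℂ‖ * ‖A (b i)‖ := tsum_congr fun i => norm_smul _ _
    _ ≤ Real.sqrt (∑' i, ‖⟪b i, x⟫_ℂ‖^2) * Real.sqrt (∑' i, ‖A (b i)‖^2) := hCS.2
    _ = Real.sqrt (∑' i, ‖A (b i)‖^2) * ‖x‖ := by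
        rw [hpar.tsum_eq, Real.sqrt_sq (norm_nonneg x), mul_comm]

lemma pow_apply_le (A : H →L[ℂ] H) (hhs : Summable fun i => ‖A (b i)‖^2) (m : ℕ) (x : H) :
    ‖(A^m) x‖ ≤ (Real.sqrt (∑' i, ‖A (b i)‖^2))^m * ‖x‖ := by
  induction m generalizing x with
  | zero => simp
  | succ m ih =>
    have h1 : (A^(m+1)) x = (A^m) (A x) := by rw [pow_succ]; rfl
    calc ‖(A^(m+1)) x‖ = ‖(A^m) (A x)‖ := by rw [h1]
      _ ≤ (Real.sqrt (∑' i, ‖A (b i)‖^2))^m * ‖A x‖ := ih (A x)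
      _ ≤ (Real.sqrt (∑' i, ‖A (b i)‖^2))^m * (Real.sqrt (∑' i, ‖A (b i)‖^2) * ‖x‖) := by
          exact mul_le_mul_of_nonneg_left (apply_le_of_hs b A hhs x)
            (pow_nonneg (Real.sqrt_nonneg _) m)
      _ = (Real.sqrt (∑' i, ‖A (b i)‖^2))^(m+1) * ‖x‖ := by ring

/-- Trace of `A^k`, `k ≥ 2`, is bounded by the HS norm to the `k`. -/
lemma trace_pow_bound (A : H →L[ℂ] H) (hhs : Summable fun i => ‖A (b i)‖^2) (k : ℕ)
    (hk : 2 ≤ k) :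
    ‖∑' i, ⟪b i, (A^k) (b i)⟫_ℂ‖ ≤ (Real.sqrt (∑' i, ‖A (b i)‖^2))^k := by
  obtain ⟨m, rfl⟩ : ∃ m, k = m + 2 := ⟨k - 2, by omega⟩
  set S := Real.sqrt (∑' i, ‖A (b i)‖^2) with hS
  have hS0 : 0 ≤ S := Real.sqrt_nonneg _
  have hterm : ∀ i, ‖⟪b i, (A^(m+2)) (b i)⟫_ℂ‖ ≤ S^m * (‖adjoint A (b i)‖ * ‖A (b i)‖) := by
    intro i
    have h1 : (A^(m+2)) (b i) = A ((A^(m+1)) (b i)) := by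
      rw [pow_succ']; rfl
    have h2 : ⟪b i, (A^(m+2)) (b i)⟫_ℂ = ⟪adjoint A (b i), (A^(m+1)) (b i)⟫_ℂ := by
      rw [h1, ← ContinuousLinearMap.adjoint_inner_left]
    rw [h2]
    have h3 : ‖(A^(m+1)) (b i)‖ ≤ S^m * ‖A (b i)‖ := by
      have : (A^(m+1)) (b i) = (A^m) (A (b i)) := by rw [pow_succ]; rfl
      rw [this]
      exact pow_apply_le b A hhs m (A (b i))
    calc ‖⟪adjoint A (b i), (A^(m+1)) (b i)⟫_ℂ‖ ≤ ‖adjoint A (b i)‖ * ‖(A^(m+1)) (b i)‖ :=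
          norm_inner_le_norm _ _
      _ ≤ ‖adjoint A (b i)‖ * (S^m * ‖A (b i)‖) := by
          exact mul_le_mul_of_nonneg_left h3 (norm_nonneg _)
      _ = S^m * (‖adjoint A (b i)‖ * ‖A (b i)‖) := by ring
  have hadj := adjoint_hs b A hhs
  have hCS := tsum_mul_le_sqrt (f := fun i => ‖adjoint A (b i)‖) (g := fun i => ‖A (b i)‖)
    (fun i => norm_nonneg _) (fun i => norm_nonneg _) hadj.1 hhs
  have hsummaj : Summable (fun i => S^m * (‖adjoint A (b i)‖ * ‖A (b i)‖)) := hCS.1.mul_left _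
  have hsumd : Summable (fun i => ‖⟪b i, (A^(m+2)) (b i)⟫_ℂ‖) :=
    Summable.of_nonneg_of_le (fun i => norm_nonneg _) hterm hsummaj
  have hsqrtadj : Real.sqrt (∑' i, ‖adjoint A (b i)‖^2) ≤ S := by
    rw [hS]
    exact Real.sqrt_le_sqrt hadj.2
  calc ‖∑' i, ⟪b i, (A^(m+2)) (b i)⟫_ℂ‖ ≤ ∑' i, ‖⟪b i, (A^(m+2)) (b i)⟫_ℂ‖ :=
        norm_tsum_le_tsum_norm hsumd
    _ ≤ ∑' i, S^m * (‖adjoint A (b i)‖ * ‖A (b i)‖) := hsumd.tsum_le_tsum hterm hsummaj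
    _ = S^m * ∑' i, ‖adjoint A (b i)‖ * ‖A (b i)‖ := tsum_mul_left
    _ ≤ S^m * (Real.sqrt (∑' i, ‖adjoint A (b i)‖^2) * Real.sqrt (∑' i, ‖A (b i)‖^2)) := by
        exact mul_le_mul_of_nonneg_left hCS.2 (pow_nonneg hS0 m)
    _ ≤ S^m * (S * S) := by
        refine mul_le_mul_of_nonneg_left ?_ (pow_nonneg hS0 m)
        exact mul_le_mul hsqrtadj le_rfl (Real.sqrt_nonneg _) hS0
    _ = S^(m+2) := by ring



variable (ε : ℝ) (hε : 0 < ε)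

-- basic function facts
lemma hcq (ε : ℝ) : Continuous (fun t : ℝ => Real.sqrt (|t| + ε)) := by fun_prop
lemma hne {ε : ℝ} (hε : 0 < ε) : ∀ t : ℝ, Real.sqrt (|t| + ε) ≠ 0 := fun t =>
  ne_of_gt (Real.sqrt_pos.2 (by positivity))
lemma hcu {ε : ℝ} (hε : 0 < ε) : Continuous (fun t : ℝ => (Real.sqrt (|t| + ε))⁻¹) :=
  (hcq ε).inv₀ (hne hε)

variable {B a : H →L[ℂ] H} (ha0 : 0 ≤ a) (haa : a * a = adjoint B * B)

section ops
variable (ha0 : 0 ≤ a)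

lemma ha_sa (ha0 : 0 ≤ a) : IsSelfAdjoint a := .of_nonneg ha0
lemma hspec (ha0 : 0 ≤ a) : ∀ t ∈ spectrum ℝ a, 0 ≤ t := fun _ ht =>
  spectrum_nonneg_of_nonneg ha0 ht

end ops

lemma huq (hε : 0 < ε) (ha0 : 0 ≤ a) :
    cfc (fun t : ℝ => (Real.sqrt (|t| + ε))⁻¹) a * cfc (fun t : ℝ => Real.sqrt (|t| + ε)) a
      = 1 := by
  rw [← cfc_mul _ _ a (hcu hε).continuousOn (hcq ε).continuousOn]
  rw [show (fun t : ℝ => (Real.sqrt (|t| + ε))⁻¹ * Real.sqrt (|t| + ε)) = fun _ : ℝ => (1:ℝ) by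
    funext t; exact inv_mul_cancel₀ (hne hε t)]
  exact cfc_one ℝ a

lemma hqq (hε : 0 < ε) (ha0 : 0 ≤ a) :
    cfc (fun t : ℝ => Real.sqrt (|t| + ε)) a * cfc (fun t : ℝ => Real.sqrt (|t| + ε)) a
      = a + algebraMap ℝ (H →L[ℂ] H) ε := by
  rw [← cfc_mul _ _ a (hcq ε).continuousOn (hcq ε).continuousOn]
  have h1 : (spectrum ℝ a).EqOn (fun t : ℝ => Real.sqrt (|t| + ε) * Real.sqrt (|t| + ε))
      (fun t : ℝ => t + ε) := by
    intro t ht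
    have h0 : 0 ≤ t := hspec ha0 t ht
    simp only
    rw [Real.mul_self_sqrt (by positivity), abs_of_nonneg h0]
  rw [cfc_congr h1, cfc_add a _ _, cfc_id' ℝ a, cfc_const ε a]

lemma hXXle (hε : 0 < ε) (ha0 : 0 ≤ a) (haa : a * a = adjoint B * B) :
    adjoint (B * cfc (fun t : ℝ => (Real.sqrt (|t| + ε))⁻¹) a)
      * (B * cfc (fun t : ℝ => (Real.sqrt (|t| + ε))⁻¹) a) ≤ a := by
  set u := cfc (fun t : ℝ => (Real.sqrt (|t| + ε))⁻¹) a with hu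
  have hu_sa : IsSelfAdjoint u := cfc_predicate _ a
  have hadj : adjoint (B * u) = u * adjoint B := by
    rw [← ContinuousLinearMap.star_eq_adjoint, ← ContinuousLinearMap.star_eq_adjoint,
      star_mul, hu_sa.star_eq]
  have hrw : adjoint (B * u) * (B * u) = (u * a) * (a * u) := by
    rw [hadj, mul_assoc, ← mul_assoc (adjoint B), ← haa]
    noncomm_ring
  have hua : u * a = cfc (fun t : ℝ => (Real.sqrt (|t| + ε))⁻¹ * t) a := by
    conv_lhs => rw [← cfc_id' ℝ a (ha_sa ha0)]
    rw [← cfc_mul _ _ a (hcu hε).continuousOn (by fun_prop)]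
  have hau : a * u = cfc (fun t : ℝ => t * (Real.sqrt (|t| + ε))⁻¹) a := by
    conv_lhs => rw [← cfc_id' ℝ a (ha_sa ha0)]
    rw [← cfc_mul _ _ a (by fun_prop) (hcu hε).continuousOn]
  have hc1 : Continuous (fun t : ℝ => (Real.sqrt (|t| + ε))⁻¹ * t) :=
    (hcu hε).mul continuous_id
  have hc2 : Continuous (fun t : ℝ => t * (Real.sqrt (|t| + ε))⁻¹) :=
    continuous_id.mul (hcu hε)
  rw [hrw, hua, hau, ← cfc_mul _ _ a hc1.continuousOn hc2.continuousOn]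
  calc cfc (fun t : ℝ => (Real.sqrt (|t| + ε))⁻¹ * t * (t * (Real.sqrt (|t| + ε))⁻¹)) a
      ≤ cfc (fun t : ℝ => t) a := by
        refine cfc_mono (fun t ht => ?_) ((hc1.mul hc2).continuousOn) (by fun_prop)
        have h0 : 0 ≤ t := hspec ha0 t ht

        rw [abs_of_nonneg h0]
        have hpos : 0 < t + ε := by positivity
        have hs : Real.sqrt (t + ε) * Real.sqrt (t + ε) = t + ε :=
          Real.mul_self_sqrt (le_of_lt hpos)
        have hsne : Real.sqrt (t + ε) ≠ 0 := by
          intro h; rw [h] at hs; simp at hs; linarith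
        have key : (Real.sqrt (t + ε))⁻¹ * t * (t * (Real.sqrt (t + ε))⁻¹)
            = t * t / (t + ε) := by
          rw [div_eq_mul_inv, ← hs, mul_inv]
          ring_nf
          rw [Real.sqrt_sq (Real.sqrt_nonneg _)]
        rw [key, div_le_iff₀ hpos]
        nlinarith
    _ = a := cfc_id' ℝ a (ha_sa ha0)

lemma inner_re_nonneg {T : H →L[ℂ] H} (hT : 0 ≤ T) (x : H) : 0 ≤ (⟪x, T x⟫_ℂ).re := by
  rw [ContinuousLinearMap.nonneg_iff_isPositive] at hT
  have h := hT.inner_nonneg_right x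
  rw [Complex.le_def] at h
  simpa using h.1

lemma inner_re_mono {T T' : H →L[ℂ] H} (hT : T ≤ T') (x : H) :
    (⟪x, T x⟫_ℂ).re ≤ (⟪x, T' x⟫_ℂ).re := by
  have h := inner_re_nonneg (sub_nonneg.2 hT) x
  rw [ContinuousLinearMap.sub_apply, inner_sub_right, Complex.sub_re] at h
  linarith

lemma sa_inner_move {q : H →L[ℂ] H} (hq : IsSelfAdjoint q) (x y : H) :
    ⟪q x, y⟫_ℂ = ⟪x, q y⟫_ℂ := by
  rw [← ContinuousLinearMap.adjoint_inner_left, hq.adjoint_eq]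

lemma norm_sq_eq_re_inner (x : H) : ‖x‖^2 = (⟪x, x⟫_ℂ).re := by
  rw [@inner_self_eq_norm_sq_to_K ℂ]
  exact_mod_cast (Complex.ofReal_re _).symm

lemma norm_apply_sq (X : H →L[ℂ] H) (x : H) :
    ‖X x‖^2 = (⟪x, (adjoint X * X) x⟫_ℂ).re := by
  rw [norm_sq_eq_re_inner, ContinuousLinearMap.mul_apply, adjoint_inner_right]

lemma hq_sq (hε : 0 < ε) (ha0 : 0 ≤ a) (x : H) :
    ‖cfc (fun t : ℝ => Real.sqrt (|t| + ε)) a x‖^2 = (⟪x, a x⟫_ℂ).re + ε * ‖x‖^2 := by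
  set q := cfc (fun t : ℝ => Real.sqrt (|t| + ε)) a with hq
  have hq_sa : IsSelfAdjoint q := cfc_predicate _ a
  have h1 : ‖q x‖^2 = (⟪x, (q * q) x⟫_ℂ).re := by
    rw [norm_sq_eq_re_inner, ContinuousLinearMap.mul_apply, sa_inner_move hq_sa x (q x)]
  rw [h1, hqq ε hε ha0, ContinuousLinearMap.add_apply, inner_add_right, Complex.add_re,
    Algebra.algebraMap_eq_smul_one]
  congr 1
  have h2 : ((ε • (1 : H →L[ℂ] H)) x) = (ε : ℂ) • x := by simp
  rw [h2, inner_smul_right]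
  rw [norm_sq_eq_re_inner]
  simp [Complex.ofReal_re]

/-- The key finite-sum bound for the diagonal of a trace class operator. -/
lemma diag_sum_bound (ha0 : 0 ≤ a) (haa : a * a = adjoint B * B)
    (b : HilbertBasis ℕ ℂ H)
    (htc : Summable fun i => (⟪b i, a (b i)⟫_ℂ).re) (s : Finset ℕ) :
    ∑ i ∈ s, ‖⟪b i, B (b i)⟫_ℂ‖ ≤ ∑' i, (⟪b i, a (b i)⟫_ℂ).re := by
  set T := ∑' i, (⟪b i, a (b i)⟫_ℂ).re with hT
  have hp0 : ∀ i, 0 ≤ (⟪b i, a (b i)⟫_ℂ).re := fun i => inner_re_nonneg ha0 (b i)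
  have hT0 : 0 ≤ T := tsum_nonneg hp0
  have hd0 : 0 ≤ ∑ i ∈ s, ‖⟪b i, B (b i)⟫_ℂ‖ := Finset.sum_nonneg fun i _ => norm_nonneg _
  -- step 1: for every ε > 0 we have the bound with ε correction
  have key : ∀ ε : ℝ, 0 < ε →
      (∑ i ∈ s, ‖⟪b i, B (b i)⟫_ℂ‖)^2 ≤ T * (T + ε * s.card) := by
    intro ε hε
    set u := cfc (fun t : ℝ => (Real.sqrt (|t| + ε))⁻¹) a with hu
    set q := cfc (fun t : ℝ => Real.sqrt (|t| + ε)) a with hqdef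
    set X := B * u with hX
    have hXle : adjoint X * X ≤ a := hXXle ε hε ha0 haa
    have hXpt : ∀ x : H, ‖X x‖^2 ≤ (⟪x, a x⟫_ℂ).re := fun x => by
      rw [norm_apply_sq]; exact inner_re_mono hXle x
    have hXhs : Summable (fun j => ‖X (b j)‖^2) :=
      Summable.of_nonneg_of_le (fun j => sq_nonneg _) (fun j => hXpt (b j)) htc
    -- pointwise generalized Cauchy-Schwarz on basis vectors
    have hgcs : ∀ i, ‖⟪b i, B (b i)⟫_ℂ‖
        ≤ ‖adjoint X (b i)‖ * Real.sqrt ((⟪b i, a (b i)⟫_ℂ).re + ε) := by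
      intro i
      have hBd : B (b i) = X (q (b i)) := by
        have : X * q = B := by rw [hX, mul_assoc, huq ε hε ha0, mul_one]
        rw [← this]; rfl
      have h1 : ⟪b i, B (b i)⟫_ℂ = ⟪adjoint X (b i), q (b i)⟫_ℂ := by
        rw [hBd, ← ContinuousLinearMap.adjoint_inner_left]
      have h2 : ‖q (b i)‖ = Real.sqrt ((⟪b i, a (b i)⟫_ℂ).re + ε) := by
        have hn : ‖b i‖ = 1 := b.orthonormal.1 i
        have := hq_sq ε hε ha0 (b i)
        rw [hn] at this
        rw [← Real.sqrt_sq (norm_nonneg (q (b i))), this]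
        norm_num
      rw [h1, ← h2]
      exact norm_inner_le_norm _ _
    -- finite Cauchy-Schwarz
    have hcs : (∑ i ∈ s, ‖⟪b i, B (b i)⟫_ℂ‖)^2
        ≤ (∑ i ∈ s, ‖adjoint X (b i)‖^2) * ∑ i ∈ s, ((⟪b i, a (b i)⟫_ℂ).re + ε) := by
      calc (∑ i ∈ s, ‖⟪b i, B (b i)⟫_ℂ‖)^2
          ≤ (∑ i ∈ s, ‖adjoint X (b i)‖ * Real.sqrt ((⟪b i, a (b i)⟫_ℂ).re + ε))^2 := by
            apply pow_le_pow_left₀ hd0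
            exact Finset.sum_le_sum fun i _ => hgcs i
        _ ≤ (∑ i ∈ s, ‖adjoint X (b i)‖^2)
              * ∑ i ∈ s, (Real.sqrt ((⟪b i, a (b i)⟫_ℂ).re + ε))^2 :=
            Finset.sum_mul_sq_le_sq_mul_sq s _ _
        _ = (∑ i ∈ s, ‖adjoint X (b i)‖^2) * ∑ i ∈ s, ((⟪b i, a (b i)⟫_ℂ).re + ε) := by
            congr 1
            exact Finset.sum_congr rfl fun i _ =>
              Real.sq_sqrt (add_nonneg (hp0 i) hε.le)
    have hb1 : ∑ i ∈ s, ‖adjoint X (b i)‖^2 ≤ T := by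
      refine le_trans (adjoint_hs_sum_le b X hXhs s) ?_
      exact hXhs.tsum_le_tsum (fun j => hXpt (b j)) htc
    have hb2 : ∑ i ∈ s, ((⟪b i, a (b i)⟫_ℂ).re + ε) ≤ T + ε * s.card := by
      rw [Finset.sum_add_distrib]
      have := htc.sum_le_tsum s (fun i _ => hp0 i)
      simp only [Finset.sum_const, nsmul_eq_mul]
      rw [mul_comm]
      linarith
    calc (∑ i ∈ s, ‖⟪b i, B (b i)⟫_ℂ‖)^2
        ≤ (∑ i ∈ s, ‖adjoint X (b i)‖^2) * ∑ i ∈ s, ((⟪b i, a (b i)⟫_ℂ).re + ε) := hcs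
      _ ≤ T * (T + ε * s.card) := by
          refine mul_le_mul hb1 hb2 (Finset.sum_nonneg fun i _ => add_nonneg (hp0 i) hε.le) hT0
  -- step 2: let ε → 0
  have hsq : (∑ i ∈ s, ‖⟪b i, B (b i)⟫_ℂ‖)^2 ≤ T^2 := by
    refine le_of_forall_pos_le_add fun δ hδ => ?_
    have hε : (0:ℝ) < δ / (T * s.card + 1) := by positivity
    refine (key _ hε).trans ?_
    have h1 : T * (δ / (T * s.card + 1) * s.card) ≤ δ := by
      rw [div_mul_eq_mul_div, mul_div_assoc']
      rw [div_le_iff₀ (by positivity)]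
      have hc0 : (0:ℝ) ≤ (s.card : ℝ) := Nat.cast_nonneg _
      nlinarith
    nlinarith [sq_nonneg T]
  exact sq_le_imp hd0 hT0 hsq

end Stmt11Aux


section Stmt11Final
open scoped InnerProductSpace ComplexConjugate
open ContinuousLinearMap Stmt11Aux
set_option maxHeartbeats 2000000
set_option synthInstance.maxHeartbeats 400000

variable {H : Type} [NormedAddCommGroup H] [InnerProductSpace ℂ H] [CompleteSpace H]

lemma Stmt11Aux.cycle_support_sum {n : ℕ} (ξ : Equiv.Perm (Fin n)) :
    ∑ η ∈ ξ.cycleFactorsFinset, η.support.card = ξ.support.card := by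
  have h1 := Equiv.Perm.sum_cycleType ξ
  rw [Equiv.Perm.cycleType_def] at h1
  rw [← h1, Finset.sum]
  rfl

/-- The combinatorial estimate: `‖Cₙ(A)‖ ≤ Mⁿ` given bounds on the traces. -/
lemma Stmt11Aux.cycleSum_bound (b : HilbertBasis ℕ ℂ H) (trA : ℂ) (A : H →L[ℂ] H)
    (M : ℝ) (hM0 : 0 ≤ M) (htr : ‖trA‖ ≤ M)
    (hpow : ∀ k : ℕ, 2 ≤ k → ‖traceAlong b (A ^ k)‖ ≤ M ^ k) (n : ℕ) :
    ‖cycleSum b trA A n‖ ≤ M ^ n := by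
  rw [cycleSum, norm_mul]
  have hfac : ‖((Nat.factorial n : ℂ))⁻¹‖ = ((Nat.factorial n : ℝ))⁻¹ := by
    rw [norm_inv]
    norm_num
  have hterm : ∀ ξ : Equiv.Perm (Fin n),
      ‖((Equiv.Perm.sign ξ : ℤ) : ℂ) * trA ^ (n - ξ.support.card) *
        ∏ η ∈ ξ.cycleFactorsFinset, traceAlong b (A ^ η.support.card)‖ ≤ M ^ n := by
    intro ξ
    have hsign : ‖((Equiv.Perm.sign ξ : ℤ) : ℂ)‖ = 1 := by
      rcases Int.units_eq_one_or (Equiv.Perm.sign ξ) with h | h <;> rw [h] <;> simp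
    have hc_le : ξ.support.card ≤ n := by simpa using Finset.card_le_univ ξ.support
    have hprod : ‖∏ η ∈ ξ.cycleFactorsFinset, traceAlong b (A ^ η.support.card)‖
        ≤ M ^ ξ.support.card := by
      rw [norm_prod]
      calc ∏ η ∈ ξ.cycleFactorsFinset, ‖traceAlong b (A ^ η.support.card)‖
          ≤ ∏ η ∈ ξ.cycleFactorsFinset, M ^ η.support.card := by
            refine Finset.prod_le_prod (fun η _ => norm_nonneg _) (fun η hη => ?_)
            refine hpow _ ?_
            exact (Equiv.Perm.mem_cycleFactorsFinset_iff.1 hη).1.two_le_card_support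
        _ = M ^ (∑ η ∈ ξ.cycleFactorsFinset, η.support.card) :=
            Finset.prod_pow_eq_pow_sum _ _ _
        _ = M ^ ξ.support.card := by rw [Stmt11Aux.cycle_support_sum]
    calc ‖((Equiv.Perm.sign ξ : ℤ) : ℂ) * trA ^ (n - ξ.support.card) *
          ∏ η ∈ ξ.cycleFactorsFinset, traceAlong b (A ^ η.support.card)‖
        = ‖((Equiv.Perm.sign ξ : ℤ) : ℂ)‖ * ‖trA‖ ^ (n - ξ.support.card) *
          ‖∏ η ∈ ξ.cycleFactorsFinset, traceAlong b (A ^ η.support.card)‖ := by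
          rw [norm_mul, norm_mul, norm_pow]
      _ ≤ 1 * M ^ (n - ξ.support.card) * M ^ ξ.support.card := by
          refine mul_le_mul ?_ hprod (norm_nonneg _) ?_
          · rw [hsign]
            refine mul_le_mul le_rfl (pow_le_pow_left₀ (norm_nonneg _) htr _) ?_ ?_
            · exact pow_nonneg (norm_nonneg _) _
            · exact zero_le_one
          · exact mul_nonneg zero_le_one (pow_nonneg hM0 _)
      _ = M ^ (n - ξ.support.card + ξ.support.card) := by rw [one_mul, ← pow_add]
      _ = M ^ n := by rw [Nat.sub_add_cancel hc_le]
  calc ‖((Nat.factorial n : ℂ))⁻¹‖ * ‖∑ ξ : Equiv.Perm (Fin n),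
        ((Equiv.Perm.sign ξ : ℤ) : ℂ) * trA ^ (n - ξ.support.card) *
          ∏ η ∈ ξ.cycleFactorsFinset, traceAlong b (A ^ η.support.card)‖
      ≤ ((Nat.factorial n : ℝ))⁻¹ * ∑ ξ : Equiv.Perm (Fin n), M ^ n := by
        rw [hfac]
        refine mul_le_mul le_rfl ?_ (norm_nonneg _) (by positivity)
        exact le_trans (norm_sum_le _ _) (Finset.sum_le_sum fun ξ _ => hterm ξ)
    _ = M ^ n := by
        rw [Finset.sum_const, Finset.card_univ, Fintype.card_perm, Fintype.card_fin,
          nsmul_eq_mul]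
        rw [← mul_assoc, inv_mul_cancel₀ (by positivity), one_mul]

end Stmt11Final

/-- Let `A ∈ L_{1|2}(H)` with `‖A‖_{1|2} := max(‖A‖₂, ‖A_even‖₁) < 1`.
Then `|Cₙ(A)| ≤ ‖A‖_{1|2}ⁿ` for every `n ≥ 1`, and the series `1 + Σ_{n≥1} Cₙ(A)`
converges absolutely; here `Cₙ(A)` is the cycle sum with the convention
`tr(A) := Tr(A_even)`. -/
theorem stmt_11 {H : Type}
    [NormedAddCommGroup H] [InnerProductSpace ℂ H] [CompleteSpace H]
    (b : HilbertBasis ℕ ℂ H) (P₁ P₂ : H →L[ℂ] H)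
    (hP₁ : IsIdempotentElem P₁) (hP₁sa : IsSelfAdjoint P₁)
    (hP₂ : IsIdempotentElem P₂) (hP₂sa : IsSelfAdjoint P₂)
    (hsum : P₁ + P₂ = 1)
    (A : H →L[ℂ] H)
    (heven : IsTraceClassAlong b (P₁ * A * P₁ + P₂ * A * P₂))
    (hhs : IsHSAlong b A)
    (hnorm :
      max (hsNormAlong b A) (traceNormAlong b (P₁ * A * P₁ + P₂ * A * P₂)) < 1) :
    (∀ n : ℕ,
        ‖(cycleSum b (traceAlong b (P₁ * A * P₁ + P₂ * A * P₂)) A (n + 1))‖ ≤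
          max (hsNormAlong b A) (traceNormAlong b (P₁ * A * P₁ + P₂ * A * P₂))
            ^ (n + 1)) ∧
      Summable (fun n : ℕ =>
        ‖(cycleSum b (traceAlong b (P₁ * A * P₁ + P₂ * A * P₂)) A (n + 1))‖) := by
  classical
  set B := P₁ * A * P₁ + P₂ * A * P₂ with hB
  set S := hsNormAlong b A with hS
  set T := traceNormAlong b B with hT
  set M := max S T with hM
  have hS0 : 0 ≤ S := Real.sqrt_nonneg _
  have hM0 : 0 ≤ M := le_trans hS0 (le_max_left _ _)
  -- the absolute value of B
  have ha0 : 0 ≤ absCLM B := CFC.sqrt_nonneg _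
  have haa : absCLM B * absCLM B = ContinuousLinearMap.adjoint B * B := by
    rw [absCLM, ← pow_two, CFC.sq_sqrt (ContinuousLinearMap.adjoint B * B) ?h]
    case h => rw [← ContinuousLinearMap.star_eq_adjoint]; exact star_mul_self_nonneg B
  have htc : Summable fun i => (⟪b i, absCLM B (b i)⟫_ℂ).re := heven
  -- trace bound for the even part
  have hdiag : ∀ s : Finset ℕ, ∑ i ∈ s, ‖⟪b i, B (b i)⟫_ℂ‖ ≤ T :=
    Stmt11Aux.diag_sum_bound ha0 haa b htc
  have hdsummable : Summable fun i => ‖⟪b i, B (b i)⟫_ℂ‖ :=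
    summable_of_sum_le (fun i => norm_nonneg _) hdiag
  have htrB : ‖traceAlong b B‖ ≤ T := by
    rw [traceAlong]
    refine le_trans (norm_tsum_le_tsum_norm hdsummable) ?_
    exact hdsummable.tsum_le_of_sum_le hdiag
  -- trace bounds for powers
  have hhs' : Summable fun i => ‖A (b i)‖ ^ 2 := hhs
  have hpow : ∀ k : ℕ, 2 ≤ k → ‖traceAlong b (A ^ k)‖ ≤ M ^ k := by
    intro k hk
    refine le_trans (Stmt11Aux.trace_pow_bound b A hhs' k hk) ?_
    exact pow_le_pow_left₀ hS0 (le_max_left _ _) k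
  have htrM : ‖traceAlong b B‖ ≤ M := le_trans htrB (le_max_right _ _)
  -- the master bound
  have hbound : ∀ n : ℕ, ‖cycleSum b (traceAlong b B) A n‖ ≤ M ^ n :=
    Stmt11Aux.cycleSum_bound b (traceAlong b B) A M hM0 htrM hpow
  constructor
  · intro n
    exact hbound (n + 1)
  · have hM1 : M < 1 := by
      rw [hM]
      exact max_lt_iff.2 ⟨lt_of_le_of_lt (le_max_left _ _) hnorm,
        lt_of_le_of_lt (le_max_right _ _) hnorm⟩
    have hgeom : Summable fun n : ℕ => M ^ (n + 1) := by
      have h := (summable_geometric_of_lt_one hM0 hM1).mul_right M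
      refine h.congr fun n => ?_
      rw [← pow_succ]
    refine Summable.of_nonneg_of_le (fun n => norm_nonneg _) (fun n => ?_) hgeom
    exact hbound (n + 1)
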